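/- The product of any family of Baire spaces, each of which has a countable pseudobase, is a Baire space. -/

import Mathlib

open Set Function

namespace OxtobyAux

set_option linter.unusedSectionVars false

variable {ι : Type*} [DecidableEq ι] {X : ι → Type*} [∀ i, TopologicalSpace (X i)]

variable (b : ∀ i, ℕ → Set (X i))

/-- Box coded by a finite set of constraints `(i, k)` meaning `x i ∈ b i k`. -/
def box (d : Finset (ι × ℕ)) : Set (∀ i, X i) := {x | ∀ p ∈ d, x p.1 ∈ b p.1 p.2}

/-- Component of the coded box at coordinate `i`. -/
def comp (d : Finset (ι × ℕ)) (i : ι) : Set (X i) := {v | ∀ p ∈ d, p.1 = i → v ∈ b i p.2}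

theorem box_open (hbo : ∀ i k, IsOpen (b i k)) (d : Finset (ι × ℕ)) : IsOpen (box b d) := by
  have : box b d = ⋂ p ∈ d, (fun x : ∀ i, X i => x p.1) ⁻¹' (b p.1 p.2) := by
    ext x; simp [box]
  rw [this]
  exact isOpen_biInter_finset fun p _ => (hbo p.1 p.2).preimage (continuous_apply p.1)

theorem comp_open (hbo : ∀ i k, IsOpen (b i k)) (d : Finset (ι × ℕ)) (i : ι) :
    IsOpen (comp b d i) := by
  have : comp b d i = ⋂ p ∈ d, {v : X i | p.1 = i → v ∈ b i p.2} := by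
    ext v; simp [comp]
  rw [this]
  refine isOpen_biInter_finset fun p _ => ?_
  by_cases h : p.1 = i
  · simpa [h] using hbo i p.2
  · simp [h]

theorem mem_box_iff {d : Finset (ι × ℕ)} {x : ∀ i, X i} :
    x ∈ box b d ↔ ∀ i, x i ∈ comp b d i := by
  constructor
  · intro hx i p hp he
    subst he; exact hx p hp
  · intro h p hp
    exact h p.1 p hp rfl

theorem box_antitone {d d' : Finset (ι × ℕ)} (h : d ⊆ d') : box b d' ⊆ box b d :=
  fun _ hx p hp => hx p (h hp)

theorem box_subset_filter (d : Finset (ι × ℕ)) (q : ι × ℕ → Prop) [DecidablePred q] :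
    box b d ⊆ box b (d.filter q) :=
  box_antitone b (Finset.filter_subset _ _)

theorem update_mem_box {d : Finset (ι × ℕ)} {j : ι} {v : X j} {x : ∀ i, X i}
    (hv : v ∈ comp b d j) (hx : x ∈ box b (d.filter fun p => p.1 ≠ j)) :
    Function.update x j v ∈ box b d := by
  intro p hp
  by_cases h : p.1 = j
  · subst h
    simpa using hv p hp rfl
  · have hpf : p ∈ d.filter fun p => p.1 ≠ j := Finset.mem_filter.2 ⟨hp, h⟩
    rw [Function.update_of_ne h]
    exact hx p hpf

theorem comp_eq_image {d : Finset (ι × ℕ)} (hne : (box b d).Nonempty) (i : ι) :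
    comp b d i = (fun x : ∀ i, X i => x i) '' box b d := by
  apply Subset.antisymm
  · intro v hv
    obtain ⟨y, hy⟩ := hne
    exact ⟨Function.update y i v, update_mem_box b hv ((box_subset_filter b d _) hy),
      Function.update_self i v y⟩
  · rintro _ ⟨y, hy, rfl⟩
    exact (mem_box_iff b).1 hy i

theorem comp_mono {d d' : Finset (ι × ℕ)} (h : box b d ⊆ box b d')
    (hne : (box b d).Nonempty) (i : ι) : comp b d i ⊆ comp b d' i := by
  rw [comp_eq_image b hne i, comp_eq_image b (hne.mono h) i]
  exact image_mono h

theorem comp_filter_ne {d : Finset (ι × ℕ)} {i j : ι} (hij : i ≠ j) :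
    comp b (d.filter fun p => p.1 ≠ j) i = comp b d i := by
  ext v
  constructor
  · intro hv p hp he
    exact hv p (Finset.mem_filter.2 ⟨hp, by rw [he]; exact hij⟩) he
  · intro hv p hp he
    exact hv p (Finset.filter_subset _ _ hp) he

theorem box_insert_nonempty [∀ i, Nonempty (X i)] {d : Finset (ι × ℕ)} {j : ι} {l : ℕ}
    (hd : ∀ p ∈ d, p.1 ≠ j) (hne : (box b d).Nonempty) (hb : (b j l).Nonempty) :
    (box b (insert (j, l) d)).Nonempty := by
  obtain ⟨x, hx⟩ := hne
  obtain ⟨u, hu⟩ := hb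
  refine ⟨Function.update x j u, fun p hp => ?_⟩
  rcases Finset.mem_insert.1 hp with h | h
  · subst h
    simpa using hu
  · rw [Function.update_of_ne (hd p h)]
    exact hx p h

theorem pibase [∀ i, Nonempty (X i)] (hbn : ∀ i k, (b i k).Nonempty)
    (hb2 : ∀ i (U : Set (X i)), IsOpen U → U.Nonempty → ∃ k, b i k ⊆ U)
    {O : Set (∀ i, X i)} (hO : IsOpen O) (hne : O.Nonempty) :
    ∃ d : Finset (ι × ℕ), (box b d).Nonempty ∧ box b d ⊆ O := by
  obtain ⟨f, hf⟩ := hne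
  obtain ⟨I, u, hu, hsub⟩ := isOpen_pi_iff.1 hO f hf
  have hk : ∀ i, ∃ k, i ∈ I → b i k ⊆ u i := by
    intro i
    by_cases h : i ∈ I
    · obtain ⟨k, hk⟩ := hb2 i (u i) (hu i h).1 ⟨f i, (hu i h).2⟩
      exact ⟨k, fun _ => hk⟩
    · exact ⟨0, fun h' => absurd h' h⟩
  choose k hk using hk
  refine ⟨I.image fun i => (i, k i), ?_, ?_⟩
  · have hx : ∀ i, ∃ v : X i, i ∈ I → v ∈ b i (k i) := by
      intro i
      by_cases h : i ∈ I
      · exact ⟨(hbn i (k i)).choose, fun _ => (hbn i (k i)).choose_spec⟩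
      · exact ⟨Classical.arbitrary _, fun h' => absurd h' h⟩
    choose x hx using hx
    refine ⟨x, fun p hp => ?_⟩
    obtain ⟨i, hi, rfl⟩ := Finset.mem_image.1 hp
    exact hx i hi
  · intro y hy
    apply hsub
    intro i hi
    exact hk i hi (hy (i, k i) (Finset.mem_image.2 ⟨i, hi, rfl⟩))

theorem countable_boxcodes {S : Set ι} (hS : S.Countable) :
    {d : Finset (ι × ℕ) | ↑(d.image Prod.fst) ⊆ S}.Countable := by
  have h1 : {d : Finset (ι × ℕ) | ↑(d.image Prod.fst) ⊆ S} =
      (fun d : Finset (ι × ℕ) => (↑d : Set (ι × ℕ))) ⁻¹'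
        {t | Set.Finite t ∧ t ⊆ S ×ˢ (univ : Set ℕ)} := by
    ext d
    simp only [mem_setOf_eq, mem_preimage, Finset.coe_image]
    constructor
    · intro h
      exact ⟨d.finite_toSet, fun p hp => ⟨h (mem_image_of_mem _ hp), mem_univ _⟩⟩
    · rintro ⟨-, h⟩ i hi
      obtain ⟨p, hp, rfl⟩ := hi
      exact (h hp).1
  rw [h1]
  exact (Set.countable_setOf_finite_subset (hS.prod countable_univ)).preimage
    Finset.coe_injective

/-- Patch: override values at frozen coordinates. -/
def patch (z : ∀ i, X i) (Fz : Finset ι) (x : ∀ i, X i) : ∀ i, X i :=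
  fun i => if i ∈ Fz then z i else x i

theorem patch_continuous (z : ∀ i, X i) (Fz : Finset ι) : Continuous (patch z Fz) := by
  refine continuous_pi fun i => ?_
  by_cases h : i ∈ Fz
  · simpa [patch, h] using continuous_const
  · simpa [patch, h] using continuous_apply i

theorem patch_empty (z x : ∀ i, X i) : patch z ∅ x = x := by
  funext i; simp [patch]

theorem patch_eq_self {z x : ∀ i, X i} {Fz : Finset ι} (h : ∀ i ∈ Fz, x i = z i) :
    patch z Fz x = x := by
  funext i
  by_cases hi : i ∈ Fz
  · simp [patch, hi, h i hi]
  · simp [patch, hi]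

theorem patch_update {z x : ∀ i, X i} {Fz : Finset ι} {j : ι} (hj : j ∉ Fz) (v : X j) :
    patch z Fz (Function.update x j v) =
      patch (Function.update z j v) (insert j Fz) x := by
  funext i
  by_cases hij : i = j
  · subst hij
    simp [patch, hj, Finset.mem_insert_self]
  · by_cases hFz : i ∈ Fz
    · simp [patch, hFz, Finset.mem_insert_of_mem hFz, Function.update_of_ne hij]
    · have : i ∉ insert j Fz := by simp [hij, hFz]
      simp [patch, hFz, this, Function.update_of_ne hij]



set_option maxHeartbeats 1000000
variable (S : Set ι) (G : ℕ → Set (∀ i, X i))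


/-- The invariant carried along the recursion. -/
structure GoodSt (z : ∀ i, X i) (Fz : Finset ι) (dP : Finset (ι × ℕ)) : Prop where
  hFz : ↑Fz ⊆ S
  hsupp : ↑(dP.image Prod.fst) ⊆ S \ ↑Fz
  hne : (box b dP).Nonempty
  hinv : ∀ (m : ℕ) (d : Finset (ι × ℕ)), ↑(d.image Prod.fst) ⊆ S \ ↑Fz →
    (box b d).Nonempty →
    ∃ d', ↑(d'.image Prod.fst) ⊆ S \ ↑Fz ∧ (box b d').Nonempty ∧
      box b d' ⊆ (patch z Fz) ⁻¹' (G m) ∩ box b d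

theorem step [∀ i, Nonempty (X i)] [∀ i, BaireSpace (X i)]
    (hbo : ∀ i k, IsOpen (b i k)) (hbn : ∀ i k, (b i k).Nonempty)
    (hb2 : ∀ i (U : Set (X i)), IsOpen U → U.Nonempty → ∃ k, b i k ⊆ U)
    (hSc : S.Countable)
    {z : ∀ i, X i} {Fz : Finset ι} {dP : Finset (ι × ℕ)}
    (hst : GoodSt b S G z Fz dP) (n : ℕ) {j : ι} (hj : j ∈ S) :
    ∃ (z' : ∀ i, X i) (dmid : Finset (ι × ℕ)),
      GoodSt b S G z' (insert j Fz) (dmid.filter fun p => p.1 ≠ j) ∧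
      (∀ i, i ≠ j → z' i = z i) ∧
      (box b dmid).Nonempty ∧
      ↑(dmid.image Prod.fst) ⊆ S \ ↑Fz ∧
      box b dmid ⊆ (patch z Fz) ⁻¹' (G n) ∩ box b dP ∧
      (j ∉ Fz → z' j ∈ comp b dmid j) ∧
      (j ∈ Fz → z' = z) := by
  obtain ⟨dmid, hmids, hmidne, hmidsub⟩ := hst.hinv n dP hst.hsupp hst.hne
  have hfiltersupp : ∀ (d₁ : Finset (ι × ℕ)),
      ↑((d₁.filter fun p => p.1 ≠ j).image Prod.fst) ⊆ (↑(d₁.image Prod.fst) : Set ι) :=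
    fun d₁ => Finset.coe_subset.2 (Finset.image_subset_image (Finset.filter_subset _ _))
  by_cases hjF : j ∈ Fz
  · have hins : insert j Fz = Fz := Finset.insert_eq_self.2 hjF
    rw [hins]
    refine ⟨z, dmid, ?_, fun _ _ => rfl, hmidne, hmids, hmidsub,
      fun h => absurd hjF h, fun _ => rfl⟩
    exact { hFz := hst.hFz
            hsupp := (hfiltersupp dmid).trans hmids
            hne := hmidne.mono (box_subset_filter b dmid _)
            hinv := hst.hinv }
  · -- main case : freeze coordinate j
    have hjFz' : (j : ι) ∈ S \ ↑Fz := ⟨hj, by exact_mod_cast hjF⟩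
    have hsub' : (S \ ↑(insert j Fz) : Set ι) ⊆ S \ ↑Fz := by
      apply diff_subset_diff_right
      exact_mod_cast Finset.subset_insert j Fz
    have key : ∀ (m : ℕ) (d : Finset (ι × ℕ)) (l : ℕ), ∃ d' : Finset (ι × ℕ),
        ↑(d.image Prod.fst) ⊆ S \ ↑(insert j Fz) → (box b (insert (j, l) d)).Nonempty →
          ↑(d'.image Prod.fst) ⊆ S \ ↑Fz ∧ (box b d').Nonempty ∧
            box b d' ⊆ (patch z Fz) ⁻¹' (G m) ∩ box b (insert (j, l) d) := by
      intro m d l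
      by_cases h : ↑(d.image Prod.fst) ⊆ S \ ↑(insert j Fz) ∧ (box b (insert (j, l) d)).Nonempty
      · have hsupp : ↑((insert (j, l) d).image Prod.fst) ⊆ S \ ↑Fz := by
          rw [Finset.image_insert, Finset.coe_insert]
          intro i hi
          rcases mem_insert_iff.1 hi with rfl | hi
          · exact hjFz'
          · exact hsub' (h.1 hi)
        obtain ⟨d', h1, h2, h3⟩ := hst.hinv m (insert (j, l) d) hsupp h.2
        exact ⟨d', fun _ _ => ⟨h1, h2, h3⟩⟩
      · exact ⟨∅, fun h1 h2 => absurd ⟨h1, h2⟩ h⟩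
    choose d' hd' using key
    have hDc : {d : Finset (ι × ℕ) | ↑(d.image Prod.fst) ⊆ S \ ↑(insert j Fz) ∧
        (box b d).Nonempty}.Countable := by
      refine Set.Countable.mono (fun d hd => hd.1) ?_
      exact countable_boxcodes (hSc.mono diff_subset)
    have hNdense : ∀ (m : ℕ) (d : Finset (ι × ℕ)),
        ↑(d.image Prod.fst) ⊆ S \ ↑(insert j Fz) → (box b d).Nonempty →
        Dense (⋃ (l : ℕ) (_ : (box b (insert (j, l) d)).Nonempty), comp b (d' m d l) j) := by
      intro m d hd1 hd2
      rw [dense_iff_inter_open]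
      intro c hco hcne
      obtain ⟨l, hl⟩ := hb2 j c hco hcne
      have hnj : ∀ p ∈ d, p.1 ≠ j := by
        intro p hp hpj
        have : (p.1 : ι) ∈ S \ ↑(insert j Fz) :=
          hd1 (Finset.mem_coe.2 (Finset.mem_image_of_mem Prod.fst hp))
        rw [hpj] at this
        exact this.2 (by exact_mod_cast Finset.mem_insert_self j Fz)
      have hins := box_insert_nonempty b hnj hd2 (hbn j l)
      obtain ⟨h1, h2, h3⟩ := hd' m d l hd1 hins
      obtain ⟨y, hy⟩ := h2
      refine ⟨y j, ?_, ?_⟩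
      · exact hl ((h3 hy).2 (j, l) (Finset.mem_insert_self _ _))
      · exact mem_iUnion.2 ⟨l, mem_iUnion.2 ⟨hins, (mem_box_iff b).1 hy j⟩⟩
    set D : Set (ℕ × Finset (ι × ℕ)) := (univ : Set ℕ) ×ˢ
      {d : Finset (ι × ℕ) | ↑(d.image Prod.fst) ⊆ S \ ↑(insert j Fz) ∧ (box b d).Nonempty}
      with hD
    have hdense : Dense (⋂₀ ((fun p : ℕ × Finset (ι × ℕ) =>
        ⋃ (l : ℕ) (_ : (box b (insert (j, l) p.2)).Nonempty), comp b (d' p.1 p.2 l) j) '' D)) := by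
      apply dense_sInter_of_isOpen
      · rintro s ⟨⟨m, d⟩, -, rfl⟩
        exact isOpen_iUnion fun l => isOpen_iUnion fun _ => comp_open b hbo _ j
      · exact (countable_univ.prod hDc).image _
      · rintro s ⟨⟨m, d⟩, hmem, rfl⟩
        exact hNdense m d hmem.2.1 hmem.2.2
    have hcompne : (comp b dmid j).Nonempty := by
      obtain ⟨y, hy⟩ := hmidne
      exact ⟨y j, (mem_box_iff b).1 hy j⟩
    obtain ⟨v, hv1, hv2⟩ := hdense.inter_open_nonempty _ (comp_open b hbo dmid j) hcompne
    refine ⟨Function.update z j v, dmid, ?_, fun i hij => Function.update_of_ne hij _ _,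
      hmidne, hmids, hmidsub,
      fun _ => by rw [Function.update_self]; exact hv1, fun h => absurd h hjF⟩
    have hsuppFz' : ↑((dmid.filter fun p => p.1 ≠ j).image Prod.fst) ⊆ S \ ↑(insert j Fz) := by
      intro i hi
      obtain ⟨p, hp, rfl⟩ := Finset.mem_image.1 (Finset.mem_coe.1 hi)
      have hpd : p ∈ dmid := Finset.filter_subset _ _ hp
      have hpj : p.1 ≠ j := (Finset.mem_filter.1 hp).2
      have h1 : (p.1 : ι) ∈ S \ ↑Fz :=
        hmids (Finset.mem_coe.2 (Finset.mem_image_of_mem Prod.fst hpd))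
      refine ⟨h1.1, ?_⟩
      rw [Finset.coe_insert]
      rintro (h | h)
      · exact hpj h
      · exact h1.2 h
    refine { hFz := ?_, hsupp := hsuppFz', hne := hmidne.mono (box_subset_filter b dmid _),
             hinv := ?_ }
    · rw [Finset.coe_insert]
      rintro i (rfl | hi)
      · exact hj
      · exact hst.hFz hi
    · intro m d hd hdne
      have hvN : v ∈ ⋃ (l : ℕ) (_ : (box b (insert (j, l) d)).Nonempty),
          comp b (d' m d l) j :=
        hv2 _ ⟨(m, d), ⟨mem_univ _, ⟨hd, hdne⟩⟩, rfl⟩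
      simp only [mem_iUnion] at hvN
      obtain ⟨l, hins, hvc⟩ := hvN
      obtain ⟨h1, h2, h3⟩ := hd' m d l hd hins
      have hnjd : ∀ p ∈ d, p.1 ≠ j := by
        intro p hp hpj
        have : (p.1 : ι) ∈ S \ ↑(insert j Fz) :=
          hd (Finset.mem_coe.2 (Finset.mem_image_of_mem Prod.fst hp))
        rw [hpj] at this
        exact this.2 (by exact_mod_cast Finset.mem_insert_self j Fz)
      refine ⟨(d' m d l).filter (fun p => p.1 ≠ j), ?_, h2.mono (box_subset_filter b _ _), ?_⟩
      · intro i hi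
        obtain ⟨p, hp, rfl⟩ := Finset.mem_image.1 (Finset.mem_coe.1 hi)
        have hpj : p.1 ≠ j := (Finset.mem_filter.1 hp).2
        have hpd := Finset.filter_subset _ _ hp
        have hh : (p.1 : ι) ∈ S \ ↑Fz :=
          h1 (Finset.mem_coe.2 (Finset.mem_image_of_mem Prod.fst hpd))
        refine ⟨hh.1, ?_⟩
        rw [Finset.coe_insert]
        rintro (h | h)
        · exact hpj h
        · exact hh.2 h
      · intro x hx
        have hupd : Function.update x j v ∈ box b (d' m d l) := update_mem_box b hvc hx
        have h4 := h3 hupd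
        constructor
        · have h5 := h4.1
          rw [mem_preimage, patch_update hjF] at h5
          exact h5
        · have h5 : Function.update x j v ∈ box b d :=
            box_antitone b (Finset.subset_insert _ _) h4.2
          intro p hp
          have := h5 p hp
          rwa [Function.update_of_ne (hnjd p hp)] at this


variable (g : ℕ × Finset (ι × ℕ) → Finset (ι × ℕ))

def ssets (s0 : Set ι) : ℕ → Set ι
  | 0 => s0
  | n + 1 => ssets s0 n ∪
      ⋃ p ∈ {q : ℕ × Finset (ι × ℕ) | ↑(q.2.image Prod.fst) ⊆ ssets s0 n},
        ↑((g p).image Prod.fst)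

theorem ssets_mono (s0 : Set ι) : ∀ {n m : ℕ}, n ≤ m → ssets g s0 n ⊆ ssets g s0 m := by
  intro n m hnm
  induction m, hnm using Nat.le_induction with
  | base => exact subset_rfl
  | succ m hm ih => exact ih.trans subset_union_left

theorem ssets_countable (s0 : Set ι) (hs0 : s0.Countable) (n : ℕ) :
    (ssets g s0 n).Countable := by
  induction n with
  | zero => exact hs0
  | succ n ih =>
      refine ih.union (Set.Countable.biUnion ?_ fun p _ => (Finset.finite_toSet _).countable)
      have : {q : ℕ × Finset (ι × ℕ) | ↑(q.2.image Prod.fst) ⊆ ssets g s0 n} ⊆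
          (univ : Set ℕ) ×ˢ {d : Finset (ι × ℕ) | ↑(d.image Prod.fst) ⊆ ssets g s0 n} := by
        rintro ⟨m, d⟩ hq
        exact ⟨mem_univ _, hq⟩
      exact Set.Countable.mono this (countable_univ.prod (countable_boxcodes ih))

theorem finset_subset_ssets (s0 : Set ι) (F : Finset ι)
    (hF : ↑F ⊆ ⋃ n, ssets g s0 n) : ∃ n, ↑F ⊆ ssets g s0 n := by
  classical
  induction F using Finset.induction_on with
  | empty => exact ⟨0, by simp⟩
  | @insert a F ha ih =>
      have h1 : ∃ n, a ∈ ssets g s0 n := by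
        have := hF (by simp : a ∈ ↑(insert a F))
        exact mem_iUnion.1 this
      obtain ⟨n1, hn1⟩ := h1
      obtain ⟨n2, hn2⟩ := ih (fun i hi => hF (by
        rw [Finset.coe_insert]; exact Or.inr hi))
      refine ⟨max n1 n2, ?_⟩
      rw [Finset.coe_insert]
      rintro i (rfl | hi)
      · exact ssets_mono g s0 (le_max_left n1 n2) hn1
      · exact ssets_mono g s0 (le_max_right n1 n2) (hn2 hi)

theorem key [Nonempty ι] [∀ i, Nonempty (X i)] [∀ i, BaireSpace (X i)]
    (hbo : ∀ i k, IsOpen (b i k)) (hbn : ∀ i k, (b i k).Nonempty)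
    (hb2 : ∀ i (U : Set (X i)), IsOpen U → U.Nonempty → ∃ k, b i k ⊆ U)
    (G : ℕ → Set (∀ i, X i)) (hGo : ∀ n, IsOpen (G n)) (hGd : ∀ n, Dense (G n))
    (U : Set (∀ i, X i)) (hUo : IsOpen U) (hUne : U.Nonempty) :
    (U ∩ ⋂ n, G n).Nonempty := by
  classical
  obtain ⟨d₀, hd₀ne, hd₀sub⟩ := pibase b hbn hb2 hUo hUne
  have hgex : ∀ p : ℕ × Finset (ι × ℕ), ∃ d' : Finset (ι × ℕ),
      (box b p.2).Nonempty → (box b d').Nonempty ∧ box b d' ⊆ G p.1 ∩ box b p.2 := by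
    intro p
    by_cases h : (box b p.2).Nonempty
    · have hne : (G p.1 ∩ box b p.2).Nonempty := by
        have := (hGd p.1).inter_open_nonempty _ (box_open b hbo p.2) h
        exact this.imp fun x hx => ⟨hx.2, hx.1⟩
      obtain ⟨d', h1, h2⟩ := pibase b hbn hb2 ((hGo p.1).inter (box_open b hbo p.2)) hne
      exact ⟨d', fun _ => ⟨h1, h2⟩⟩
    · exact ⟨∅, fun h' => absurd h' h⟩
  choose g hg using hgex
  set s0 : Set ι := ↑(d₀.image Prod.fst) ∪ {Classical.arbitrary ι} with hs0
  have hs0c : s0.Countable := (Finset.finite_toSet _).countable.union (countable_singleton _)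
  set S : Set ι := ⋃ n, ssets g s0 n with hSdef
  have hSc : S.Countable := countable_iUnion (ssets_countable g s0 hs0c)
  have hSP : ∀ (m : ℕ) (d : Finset (ι × ℕ)), ↑(d.image Prod.fst) ⊆ S → (box b d).Nonempty →
      ∃ d', ↑(d'.image Prod.fst) ⊆ S ∧ (box b d').Nonempty ∧ box b d' ⊆ G m ∩ box b d := by
    intro m d hd hdne
    obtain ⟨n, hn⟩ := finset_subset_ssets g s0 (d.image Prod.fst) hd
    refine ⟨g (m, d), ?_, (hg (m, d) hdne).1, (hg (m, d) hdne).2⟩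
    have h1 : ↑((g (m, d)).image Prod.fst) ⊆ ssets g s0 (n + 1) := by
      intro i hi
      refine subset_union_right ?_
      exact mem_biUnion (by exact hn) hi
    exact h1.trans (subset_iUnion (ssets g s0) (n + 1))
  have hSne : S.Nonempty :=
    ⟨Classical.arbitrary ι, mem_iUnion.2 ⟨0, Or.inr (mem_singleton _)⟩⟩
  obtain ⟨e, he⟩ := hSc.exists_eq_range hSne
  have hd₀S : ↑(d₀.image Prod.fst) ⊆ S :=
    subset_union_left.trans (subset_iUnion (ssets g s0) 0)
  have good0 : GoodSt b S G (Classical.arbitrary _) ∅ d₀ := by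
    refine { hFz := by simp, hsupp := by simpa using hd₀S, hne := hd₀ne, hinv := ?_ }
    intro m d hd hdne
    obtain ⟨d', h1, h2, h3⟩ := hSP m d (by simpa using hd) hdne
    refine ⟨d', by simpa using h1, h2, ?_⟩
    intro x hx
    refine ⟨?_, (h3 hx).2⟩
    rw [mem_preimage, patch_empty]
    exact (h3 hx).1
  have hstepex : ∀ (n : ℕ) (z : ∀ i, X i) (Fz : Finset ι) (dP : Finset (ι × ℕ)),
      ∃ q : (∀ i, X i) × Finset (ι × ℕ),
        GoodSt b S G z Fz dP →
          GoodSt b S G q.1 (insert (e n) Fz) (q.2.filter fun p => p.1 ≠ e n) ∧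
          (∀ i, i ≠ e n → q.1 i = z i) ∧
          (box b q.2).Nonempty ∧
          ↑(q.2.image Prod.fst) ⊆ S \ ↑Fz ∧
          box b q.2 ⊆ (patch z Fz) ⁻¹' (G n) ∩ box b dP ∧
          (e n ∉ Fz → q.1 (e n) ∈ comp b q.2 (e n)) ∧
          (e n ∈ Fz → q.1 = z) := by
    intro n z Fz dP
    by_cases h : GoodSt b S G z Fz dP
    · have hjS : e n ∈ S := by rw [he]; exact mem_range_self n
      obtain ⟨z', dmid, h1, h2, h3, h4, h5, h6, h7⟩ := step b S G hbo hbn hb2 hSc h n hjS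
      exact ⟨(z', dmid), fun _ => ⟨h1, h2, h3, h4, h5, h6, h7⟩⟩
    · exact ⟨(z, ∅), fun h' => absurd h' h⟩
  choose stf hstf using hstepex
  let seq : ℕ → (∀ i, X i) × Finset ι × Finset (ι × ℕ) := fun n =>
    Nat.rec (Classical.arbitrary _, ∅, d₀)
      (fun n prev =>
        ((stf n prev.1 prev.2.1 prev.2.2).1,
         insert (e n) prev.2.1,
         (stf n prev.1 prev.2.1 prev.2.2).2.filter fun p => p.1 ≠ e n)) n
  let zz : ℕ → ∀ i, X i := fun n => (seq n).1
  let FF : ℕ → Finset ι := fun n => (seq n).2.1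
  let PP : ℕ → Finset (ι × ℕ) := fun n => (seq n).2.2
  let dm : ℕ → Finset (ι × ℕ) := fun n => (stf n (zz n) (FF n) (PP n)).2
  have hFF0 : FF 0 = ∅ := rfl
  have hPP0 : PP 0 = d₀ := rfl
  have hFFs : ∀ n, FF (n + 1) = insert (e n) (FF n) := fun _ => rfl
  have hPPs : ∀ n, PP (n + 1) = (dm n).filter fun p => p.1 ≠ e n := fun _ => rfl
  have good : ∀ n, GoodSt b S G (zz n) (FF n) (PP n) := by
    intro n
    induction n with
    | zero => exact good0
    | succ n ih => exact (hstf n (zz n) (FF n) (PP n) ih).1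
  have spec := fun n => hstf n (zz n) (FF n) (PP n) (good n)
  have hG2 : ∀ n, ∀ i, i ≠ e n → zz (n + 1) i = zz n i := fun n => (spec n).2.1
  have hG3 : ∀ n, (box b (dm n)).Nonempty := fun n => (spec n).2.2.1
  have hG8 : ∀ n, ↑((dm n).image Prod.fst) ⊆ S \ ↑(FF n) := fun n => (spec n).2.2.2.1
  have hG4 : ∀ n, box b (dm n) ⊆ (patch (zz n) (FF n)) ⁻¹' (G n) ∩ box b (PP n) :=
    fun n => (spec n).2.2.2.2.1
  have hG6 : ∀ n, e n ∉ FF n → zz (n + 1) (e n) ∈ comp b (dm n) (e n) :=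
    fun n => (spec n).2.2.2.2.2.1
  have hG7 : ∀ n, e n ∈ FF n → zz (n + 1) = zz n := fun n => (spec n).2.2.2.2.2.2
  have hFFmono : ∀ {n m : ℕ}, n ≤ m → FF n ⊆ FF m := by
    intro n m hnm
    induction m, hnm using Nat.le_induction with
    | base => exact subset_rfl
    | succ m hm ih =>
        rw [hFFs m]
        exact ih.trans (Finset.subset_insert _ _)
  have hzconst : ∀ (n m : ℕ), n ≤ m → ∀ i ∈ FF n, zz m i = zz n i := by
    intro n m hnm
    induction m, hnm using Nat.le_induction with
    | base => intro i _; rfl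
    | succ m hm ih =>
        intro i hi
        by_cases hie : i = e m
        · have hFm : e m ∈ FF m := hie ▸ hFFmono hm hi
          rw [hG7 m hFm]
          exact ih i hi
        · rw [hG2 m i hie]
          exact ih i hi
  have hcov : ∀ i ∈ S, ∃ n, i ∈ FF n := by
    intro i hi
    rw [he] at hi
    obtain ⟨n, rfl⟩ := hi
    exact ⟨n + 1, by rw [hFFs n]; exact Finset.mem_insert_self _ _⟩
  let x : ∀ i, X i := fun i =>
    if h : ∃ n, i ∈ FF n then zz (Nat.find h) i else zz 0 i
  have hAG : ∀ n, ∀ i ∈ FF n, x i = zz n i := by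
    intro n i hi
    have h : ∃ n, i ∈ FF n := ⟨n, hi⟩
    have hx1 : x i = zz (Nat.find h) i := dif_pos h
    rw [hx1]
    exact (hzconst (Nat.find h) n (Nat.find_min' h hi) i (Nat.find_spec h)).symm
  have hHV : ∀ (i : ι), (∃ n, i ∈ FF n) →
      ∃ k, i ∉ FF k ∧ i ∈ FF (k + 1) ∧ x i ∈ comp b (dm k) i := by
    intro i h
    have hK : i ∈ FF (Nat.find h) := Nat.find_spec h
    have hK0 : Nat.find h ≠ 0 := by
      intro h0
      rw [h0, hFF0] at hK
      exact Finset.notMem_empty i hK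
    obtain ⟨k, hk⟩ := Nat.exists_eq_succ_of_ne_zero hK0
    rw [hk] at hK
    have hnk : i ∉ FF k := Nat.find_min h (by rw [hk]; exact Nat.lt_succ_self k)
    have hie : i = e k := by
      rw [hFFs k] at hK
      rcases Finset.mem_insert.1 hK with h' | h'
      · exact h'
      · exact absurd h' hnk
    refine ⟨k, hnk, hK, ?_⟩
    rw [hAG (k + 1) i hK]
    subst hie
    exact hG6 k hnk
  have hCH1 : ∀ k i, comp b (dm k) i ⊆ comp b (PP k) i :=
    fun k i => comp_mono b (fun y hy => (hG4 k hy).2) (hG3 k) i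
  have hCH2 : ∀ (i : ι) (k n : ℕ), n ≤ k → i ∉ FF k →
      comp b (PP k) i ⊆ comp b (PP n) i := by
    intro i k
    induction k with
    | zero =>
        intro n hn _
        rw [Nat.le_zero.1 hn]
    | succ k ih =>
        intro n hn hik
        rcases Nat.lt_or_ge n (k + 1) with hlt | hge
        · have hnk : n ≤ k := Nat.lt_succ_iff.1 hlt
          have hik' : i ∉ FF k := fun h' => hik (hFFmono (Nat.le_succ k) h')
          have hie : i ≠ e k := by
            intro hie
            apply hik
            rw [hFFs k, hie]
            exact Finset.mem_insert_self _ _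
          have h1 : comp b (PP (k + 1)) i = comp b (dm k) i := by
            rw [hPPs k]
            exact comp_filter_ne b hie
          rw [h1]
          exact (hCH1 k i).trans (ih n hnk hik')
        · have : n = k + 1 := le_antisymm (by omega) hge
          rw [this]
  have hCH3 : ∀ (i : ι) (k n : ℕ), n ≤ k → i ∉ FF k →
      comp b (dm k) i ⊆ comp b (dm n) i := by
    intro i k n hnk hik
    rcases eq_or_lt_of_le hnk with rfl | hlt
    · exact subset_rfl
    · have h1 : comp b (dm k) i ⊆ comp b (PP (n + 1)) i :=
        (hCH1 k i).trans (hCH2 i k (n + 1) hlt hik)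
      have hie : i ≠ e n := by
        intro hie
        apply hik
        apply hFFmono (show n + 1 ≤ k from hlt)
        rw [hFFs n, hie]
        exact Finset.mem_insert_self _ _
      have h2 : comp b (PP (n + 1)) i = comp b (dm n) i := by
        rw [hPPs n]
        exact comp_filter_ne b hie
      rw [← h2]
      exact h1
  have hXB : ∀ n, x ∈ box b (dm n) := by
    intro n
    refine (mem_box_iff b).2 fun i => ?_
    by_cases hi : i ∈ (dm n).image Prod.fst
    · have hiS : i ∈ S \ ↑(FF n) := hG8 n (Finset.mem_coe.2 hi)
      obtain ⟨k, hnk, hK1, hxc⟩ := hHV i (hcov i hiS.1)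
      have hkn : n ≤ k := by
        by_contra hc
        push_neg at hc
        exact hiS.2 (Finset.mem_coe.2 (hFFmono (by omega : k + 1 ≤ n) hK1))
      exact hCH3 i k n hkn hnk hxc
    · intro p hp hpe
      exact absurd (by rw [← hpe]; exact Finset.mem_image_of_mem Prod.fst hp) hi
  have hXP0 : x ∈ box b d₀ := by
    refine (mem_box_iff b).2 fun i => ?_
    by_cases hi : i ∈ d₀.image Prod.fst
    · have hiS : i ∈ S := hd₀S (Finset.mem_coe.2 hi)
      obtain ⟨k, hnk, hK1, hxc⟩ := hHV i (hcov i hiS)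
      have h1 : comp b (dm k) i ⊆ comp b (PP 0) i :=
        (hCH1 k i).trans (hCH2 i k 0 (Nat.zero_le k) hnk)
      rw [hPP0] at h1
      exact h1 hxc
    · intro p hp hpe
      exact absurd (by rw [← hpe]; exact Finset.mem_image_of_mem Prod.fst hp) hi
  have hXG : ∀ n, x ∈ G n := by
    intro n
    have h1 := (hG4 n (hXB n)).1
    rw [mem_preimage, patch_eq_self (fun i hi => hAG n i hi)] at h1
    exact h1
  exact ⟨x, hd₀sub hXP0, mem_iInter.2 hXG⟩

end OxtobyAux

/-- Oxtoby's theorem: a product of Baire spaces, each having a countable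
pseudobase, is Baire. -/
theorem oxtoby_product_baire {ι : Type*} (X : ι → Type*)
    [∀ i, TopologicalSpace (X i)] [∀ i, BaireSpace (X i)]
    (hpb : ∀ i, ∃ B : Set (Set (X i)), B.Countable ∧
      (∀ b ∈ B, IsOpen b ∧ b.Nonempty) ∧
      ∀ U : Set (X i), IsOpen U → U.Nonempty → ∃ b ∈ B, b ⊆ U) :
    BaireSpace (∀ i, X i) := by
  classical
  by_cases hne : ∀ i, Nonempty (X i)
  · haveI : ∀ i, Nonempty (X i) := hne
    by_cases hι : Nonempty ι
    · have hbE : ∀ i, ∃ bb : ℕ → Set (X i), (∀ k, IsOpen (bb k) ∧ (bb k).Nonempty) ∧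
          ∀ U : Set (X i), IsOpen U → U.Nonempty → ∃ k, bb k ⊆ U := by
        intro i
        obtain ⟨B, hBc, hBo, hBsub⟩ := hpb i
        have hBne : B.Nonempty := by
          obtain ⟨b0, hb0, -⟩ := hBsub Set.univ isOpen_univ Set.univ_nonempty
          exact ⟨b0, hb0⟩
        obtain ⟨f, hf⟩ := hBc.exists_eq_range hBne
        refine ⟨f, fun k => hBo _ (by rw [hf]; exact Set.mem_range_self k), ?_⟩
        intro U hU hUne
        obtain ⟨v, hvB, hvU⟩ := hBsub U hU hUne
        rw [hf] at hvB
        obtain ⟨k, rfl⟩ := hvB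
        exact ⟨k, hvU⟩
      choose b hb1 hb2 using hbE
      refine ⟨fun f ho hd => ?_⟩
      rw [dense_iff_inter_open]
      intro U hU hUne
      exact OxtobyAux.key b (fun i k => (hb1 i k).1) (fun i k => (hb1 i k).2) hb2
        f ho hd U hU hUne
    · haveI : IsEmpty ι := not_nonempty_iff.1 hι
      haveI : Subsingleton (∀ i, X i) := ⟨fun a b => funext fun i => (IsEmpty.false i).elim⟩
      refine ⟨fun f ho hd => fun y => ?_⟩
      refine subset_closure (Set.mem_iInter.2 fun n => ?_)
      obtain ⟨w, hw⟩ := (hd n).nonempty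
      exact Subsingleton.elim w y ▸ hw
  · push_neg at hne
    obtain ⟨i0, hi0⟩ := hne
    haveI : IsEmpty (X i0) := hi0
    exact ⟨fun f ho hd => fun y => (IsEmpty.false (y i0)).elim⟩
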